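/- In Thompson's quandle P, the shift endomorphism ε (defined by ε(p_n) = p_{n+1}) satisfies ε²(p) = p_0 ▷ ε(p) for all p ∈ P. -/

import Mathlib

open Quandles

universe u v w

/-- `(P, p)` is a model of the quandle presented by generators `p 0, p 1, p 2, …` and
relations `p j ◃ p k = p (k+1)` for all `j < k` (Thompson's quandle): the relations hold
and the universal property of the presentation is satisfied. -/
structure IsThompsonQuandle (P : Type v) [Quandle P] (p : ℕ → P) : Prop where
  rel : ∀ ⦃j k : ℕ⦄, j < k → p j ◃ p k = p (k + 1)
  lift : ∀ (Q : Type u) [Quandle Q] (q : ℕ → Q),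
    (∀ ⦃j k : ℕ⦄, j < k → q j ◃ q k = q (k + 1)) →
    ∃! f : P →◃ Q, ∀ n, f (p n) = q n

/-- The shift endomorphism `ε` of Thompson's quandle satisfies `ε² p = p₀ ◃ ε p` for all `p`. -/
theorem thompson_shift_sq {P : Type v} [Quandle P] {p : ℕ → P}
    (hP : IsThompsonQuandle.{v} P p)
    (ε : P →◃ P) (hε : ∀ n : ℕ, ε (p n) = p (n + 1)) :
    ∀ x : P, ε (ε x) = p 0 ◃ ε x := by
  obtain ⟨f, hf, huniq⟩ := hP.lift P (fun n => p (n + 2)) (fun j k hjk => by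
    simpa [Nat.add_right_comm] using hP.rel (show j + 2 < k + 2 by omega))
  have conj : P →◃ P := ⟨fun x => p 0 ◃ x, Shelf.self_distrib⟩
  have h1 : ε.comp ε = f := huniq _ (fun n => by simp [hε])
  have h2 : (ShelfHom.mk (fun x => p 0 ◃ x) Shelf.self_distrib).comp ε = f :=
    huniq _ (fun n => by
      simp only [ShelfHom.comp_apply, hε]
      exact hP.rel (Nat.succ_pos n))
  intro x
  have := congrArg (fun g : P →◃ P => g x) (h1.trans h2.symm)
  exact this
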